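/- There exists a family (ρ_𝐤)_{𝐤 ∈ ℤ₊^𝑁} of nonnegative real numbers such that for every v ∈ [0,1)^𝑁 the multivariate power series converges with sum Σ_{𝐤 ∈ ℤ₊^𝑁} ρ_𝐤 · ∏_{j∈𝑁} v_j^{k_j} = ρ(v). -/

import Mathlib

open scoped ENNReal
namespace Stmt4Aux

variable {ι : Type*} [Fintype ι] [DecidableEq ι]
set_option linter.unusedSectionVars false

noncomputable def mval (v : ι → ℝ≥0∞) (k : ι → ℕ) : ℝ≥0∞ := ∏ j, v j ^ k j

lemma mval_add (v : ι → ℝ≥0∞) (k₁ k₂ : ι → ℕ) :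
    mval v (k₁ + k₂) = mval v k₁ * mval v k₂ := by
  simp [mval, pow_add, Finset.prod_mul_distrib]

noncomputable def ev (f : (ι → ℕ) → ℝ≥0∞) (v : ι → ℝ≥0∞) : ℝ≥0∞ :=
  ∑' k, f k * mval v k

lemma ev_mono {f g : (ι → ℕ) → ℝ≥0∞} (h : f ≤ g) (v : ι → ℝ≥0∞) :
    ev f v ≤ ev g v :=
  ENNReal.tsum_le_tsum fun k => mul_le_mul_left (h k) _

noncomputable def conv (f g : (ι → ℕ) → ℝ≥0∞) : (ι → ℕ) → ℝ≥0∞ :=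
  fun k => ∑' p : (ι → ℕ) × (ι → ℕ), if p.1 + p.2 = k then f p.1 * g p.2 else 0

lemma conv_mono {f f' g g' : (ι → ℕ) → ℝ≥0∞} (hf : f ≤ f') (hg : g ≤ g') :
    conv f g ≤ conv f' g' := fun k =>
  ENNReal.tsum_le_tsum fun p => by
    by_cases h : p.1 + p.2 = k <;> simp [h, mul_le_mul' (hf p.1) (hg p.2)]

lemma ev_conv (f g : (ι → ℕ) → ℝ≥0∞) (v : ι → ℝ≥0∞) :
    ev (conv f g) v = ev f v * ev g v := by
  have h1 : ev (conv f g) v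
      = ∑' k, ∑' p : (ι → ℕ) × (ι → ℕ),
          (if p.1 + p.2 = k then f p.1 * g p.2 else 0) * mval v k := by
    simp only [ev, conv]
    exact tsum_congr fun k => ENNReal.tsum_mul_right.symm
  rw [h1, ENNReal.tsum_comm]
  have h2 : ∀ p : (ι → ℕ) × (ι → ℕ),
      (∑' k, (if p.1 + p.2 = k then f p.1 * g p.2 else 0) * mval v k)
        = (f p.1 * mval v p.1) * (g p.2 * mval v p.2) := by
    intro p
    have : ∀ k : ι → ℕ, (if p.1 + p.2 = k then f p.1 * g p.2 else 0) * mval v k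
        = if k = p.1 + p.2 then f p.1 * g p.2 * mval v (p.1 + p.2) else 0 := by
      intro k
      by_cases h : p.1 + p.2 = k
      · simp [h, eq_comm]
      · simp [h, Ne.symm h, fun hh : k = p.1 + p.2 => h hh.symm]
    rw [tsum_congr this, tsum_ite_eq, mval_add]
    ring
  rw [tsum_congr h2, ENNReal.tsum_prod']
  simp only [ENNReal.tsum_mul_left, ENNReal.tsum_mul_right]
  rfl

noncomputable def delta (k₀ : ι → ℕ) : (ι → ℕ) → ℝ≥0∞ := fun k => if k = k₀ then 1 else 0

lemma ev_delta (k₀ : ι → ℕ) (v : ι → ℝ≥0∞) : ev (delta k₀) v = mval v k₀ := by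
  simp only [ev, delta]
  have : ∀ k : ι → ℕ, (if k = k₀ then (1 : ℝ≥0∞) else 0) * mval v k
      = if k = k₀ then mval v k₀ else 0 := by
    intro k; by_cases h : k = k₀ <;> simp [h]
  rw [tsum_congr this, tsum_ite_eq]

noncomputable def pw (f : (ι → ℕ) → ℝ≥0∞) : ℕ → ((ι → ℕ) → ℝ≥0∞)
  | 0 => delta 0
  | j + 1 => conv f (pw f j)

lemma ev_pw (f : (ι → ℕ) → ℝ≥0∞) (v : ι → ℝ≥0∞) (j : ℕ) :
    ev (pw f j) v = (ev f v) ^ j := by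
  induction j with
  | zero => simp [pw, ev_delta, mval]
  | succ j ih => rw [pw, ev_conv, ih, pow_succ]; ring

lemma pw_mono {f g : (ι → ℕ) → ℝ≥0∞} (h : f ≤ g) (j : ℕ) : pw f j ≤ pw g j := by
  induction j with
  | zero => exact le_rfl
  | succ j ih => exact conv_mono h ih

noncomputable def single (j₀ : ι) : ι → ℕ := fun j => if j = j₀ then 1 else 0

lemma mval_single (v : ι → ℝ≥0∞) (j₀ : ι) : mval v (single j₀) = v j₀ := by
  simp only [mval, single]
  have h : ∀ j : ι, v j ^ (if j = j₀ then 1 else 0) = if j = j₀ then v j else 1 := by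
    intro j; split <;> simp
  rw [Finset.prod_congr rfl fun j _ => h j, Finset.prod_ite_eq' Finset.univ j₀ v]
  simp

lemma tsum_iSup_mono {α : Type*} (f : ℕ → α → ℝ≥0∞) (hf : Monotone f) :
    ∑' a, ⨆ n, f n a = ⨆ n, ∑' a, f n a := by
  simp_rw [ENNReal.tsum_eq_iSup_sum]
  rw [iSup_comm]
  exact iSup_congr fun s =>
    ENNReal.finsetSum_iSup_of_monotone fun a m n h => hf h a

lemma iSup_mul_iSup_mono {f g : ℕ → ℝ≥0∞} (hf : Monotone f) (hg : Monotone g) :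
    (⨆ n, f n) * (⨆ n, g n) = ⨆ n, f n * g n := by
  apply le_antisymm
  · rw [ENNReal.iSup_mul]
    refine iSup_le fun i => ?_
    rw [ENNReal.mul_iSup]
    refine iSup_le fun j => ?_
    exact le_iSup_of_le (max i j)
      (mul_le_mul' (hf (le_max_left i j)) (hg (le_max_right i j)))
  · exact iSup_le fun n => mul_le_mul' (le_iSup f n) (le_iSup g n)

lemma iSup_pow_mono {f : ℕ → ℝ≥0∞} (hf : Monotone f) (j : ℕ) :
    (⨆ n, f n) ^ j = ⨆ n, f n ^ j := by
  induction j with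
  | zero => simp
  | succ j ih =>
    rw [pow_succ, ih, iSup_mul_iSup_mono (fun m n h => pow_le_pow_left' (hf h) j) hf]
    simp [pow_succ]

-- === N-specific layer ===
section NSec
variable (b : ℕ → ℝ) (N : Finset ℕ)

noncomputable def cE : ℕ → ℝ≥0∞ := fun n => ENNReal.ofReal (b n / (-(b 1)))

noncomputable def thetaV (V : {x // x ∈ N} → ℝ≥0∞) : ℕ → ℝ≥0∞ :=
  fun n => if h : n ∈ N then V ⟨n, h⟩ else 1

noncomputable def Phi (V : {x // x ∈ N} → ℝ≥0∞) (u : ℝ≥0∞) : ℝ≥0∞ :=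
  ∑' n : ℕ, cE b n * thetaV N V n * u ^ n

lemma Phi_mono (V : {x // x ∈ N} → ℝ≥0∞) : Monotone (Phi b N V) := fun u u' h =>
  ENNReal.tsum_le_tsum fun n => mul_le_mul' le_rfl (pow_le_pow_left' h n)

noncomputable def stepOp (f : ({x // x ∈ N} → ℕ) → ℝ≥0∞) :
    ({x // x ∈ N} → ℕ) → ℝ≥0∞ :=
  fun k => ∑' n : ℕ,
    cE b n * (if h : n ∈ N then conv (delta (single ⟨n, h⟩)) (pw f n) k else pw f n k)

lemma stepOp_mono {f g : ({x // x ∈ N} → ℕ) → ℝ≥0∞} (h : f ≤ g) :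
    stepOp b N f ≤ stepOp b N g := fun k => by
  refine ENNReal.tsum_le_tsum fun n => mul_le_mul' le_rfl ?_
  by_cases hn : n ∈ N
  · simp only [hn, dif_pos]
    exact conv_mono le_rfl (pw_mono h n) k
  · simp only [hn, dif_neg, not_false_iff]
    exact pw_mono h n k

lemma ev_stepOp (f : ({x // x ∈ N} → ℕ) → ℝ≥0∞) (V : {x // x ∈ N} → ℝ≥0∞) :
    ev (stepOp b N f) V = Phi b N V (ev f V) := by
  have h1 : ev (stepOp b N f) V
      = ∑' k, ∑' n : ℕ, cE b n *
          (if h : n ∈ N then conv (delta (single ⟨n, h⟩)) (pw f n) k else pw f n k)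
            * mval V k := by
    simp only [ev, stepOp]
    exact tsum_congr fun k => ENNReal.tsum_mul_right.symm
  rw [h1, ENNReal.tsum_comm]
  simp only [Phi]
  refine tsum_congr fun n => ?_
  have h2 : ∀ k, cE b n *
        (if h : n ∈ N then conv (delta (single ⟨n, h⟩)) (pw f n) k else pw f n k)
          * mval V k
      = cE b n * ((if h : n ∈ N then conv (delta (single ⟨n, h⟩)) (pw f n) k
          else pw f n k) * mval V k) := fun k => by ring
  rw [tsum_congr h2, ENNReal.tsum_mul_left]
  by_cases hn : n ∈ N
  · simp only [hn, dif_pos]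
    have h3 : (∑' k, conv (delta (single (⟨n, hn⟩ : {x // x ∈ N}))) (pw f n) k * mval V k)
        = ev (conv (delta (single ⟨n, hn⟩)) (pw f n)) V := rfl
    rw [h3, ev_conv, ev_delta, mval_single, ev_pw]
    simp only [thetaV, hn, dif_pos]
    ring
  · simp only [hn, dif_neg, not_false_iff]
    have h3 : (∑' k, pw f n k * mval V k) = ev (pw f n) V := rfl
    rw [h3, ev_pw]
    simp only [thetaV, hn, dif_neg, not_false_iff]
    ring

noncomputable def iter : ℕ → (({x // x ∈ N} → ℕ) → ℝ≥0∞)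
  | 0 => fun _ => 0
  | n + 1 => stepOp b N (iter n)

noncomputable def coeff : ({x // x ∈ N} → ℕ) → ℝ≥0∞ := fun k => ⨆ n, iter b N n k

lemma bridge (hb_nonneg : ∀ j : ℕ, j ≠ 1 → 0 ≤ b j) (hb1 : b 1 < 0)
    (hb_sum : HasSum (fun j : ℕ => if j = 1 then 0 else b j) (-(b 1)))
    (h1N : (1 : ℕ) ∉ N)
    (v : {x // x ∈ N} → ℝ) (hv : ∀ j, v j ∈ Set.Icc (0 : ℝ) 1)
    (u : ℝ) (hu : u ∈ Set.Icc (0 : ℝ) 1) :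
    Phi b N (fun j => ENNReal.ofReal (v j)) (ENNReal.ofReal u) = ENNReal.ofReal u ↔
      (∑' j : ℕ, if j ∈ N then 0 else b j * u ^ j)
        + (∑ j : {x // x ∈ N}, b j * v j * u ^ (j : ℕ)) = 0 := by
  set β : ℝ := -(b 1) with hβdef
  have hβ : 0 < β := by simpa [hβdef] using hb1
  obtain ⟨hu0, hu1⟩ := hu
  -- real-side ingredients
  set tvr : ℕ → ℝ := fun n => if h : n ∈ N then v ⟨n, h⟩ else 1 with htvr
  have htvr_nonneg : ∀ n, 0 ≤ tvr n := by
    intro n; simp only [htvr]; split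
    · exact (hv _).1
    · norm_num
  have htvr_le_one : ∀ n, tvr n ≤ 1 := by
    intro n; simp only [htvr]; split
    · exact (hv _).2
    · exact le_refl 1
  set tr : ℕ → ℝ := fun n => (if n = 1 then 0 else b n / β) * tvr n * u ^ n with htr
  have htr_nonneg : ∀ n, 0 ≤ tr n := by
    intro n; simp only [htr]
    refine mul_nonneg (mul_nonneg ?_ (htvr_nonneg n)) (pow_nonneg hu0 n)
    split
    · exact le_refl 0
    · exact div_nonneg (hb_nonneg n (by assumption)) hβ.le
  have hb_summable : Summable (fun j : ℕ => if j = 1 then 0 else b j) := hb_sum.summable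
  have htr_summable : Summable tr := by
    refine Summable.of_nonneg_of_le htr_nonneg ?_ (hb_summable.mul_right (1 / β))
    intro n
    simp only [htr]
    by_cases h1 : n = 1
    · simp [h1]
    · simp only [h1, if_neg, not_false_iff]
      have hbb : 0 ≤ b n / β := div_nonneg (hb_nonneg n h1) hβ.le
      have h2 : b n / β * tvr n * u ^ n ≤ b n / β * 1 * 1 := by
        gcongr
        · exact htvr_le_one n
        · exact pow_le_one₀ hu0 hu1
      calc b n / β * tvr n * u ^ n ≤ b n / β * 1 * 1 := h2
        _ = b n * (1 / β) := by ring
  -- Phi at ofReal u equals ofReal of the real sum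
  have hterm : ∀ n : ℕ,
      cE b n * thetaV N (fun j => ENNReal.ofReal (v j)) n * (ENNReal.ofReal u) ^ n
        = ENNReal.ofReal (tr n) := by
    intro n
    by_cases h1 : n = 1
    · subst h1
      have : cE b 1 = 0 := by
        simp only [cE, ENNReal.ofReal_eq_zero]
        exact div_nonpos_of_nonpos_of_nonneg hb1.le hβ.le
      simp [this, htr]
    · have hcb : cE b n = ENNReal.ofReal (b n / β) := rfl
      have hth : thetaV N (fun j => ENNReal.ofReal (v j)) n = ENNReal.ofReal (tvr n) := by
        simp only [thetaV, htvr]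
        split
        · rfl
        · simp
      rw [hcb, hth, ← ENNReal.ofReal_pow hu0, ← ENNReal.ofReal_mul
          (div_nonneg (hb_nonneg n h1) hβ.le), ← ENNReal.ofReal_mul
          (mul_nonneg (div_nonneg (hb_nonneg n h1) hβ.le) (htvr_nonneg n))]
      simp only [htr, h1, if_neg, not_false_iff]
  have hPhi : Phi b N (fun j => ENNReal.ofReal (v j)) (ENNReal.ofReal u)
      = ENNReal.ofReal (∑' n, tr n) := by
    rw [Phi, tsum_congr hterm, ← ENNReal.ofReal_tsum_of_nonneg htr_nonneg htr_summable]
  rw [hPhi, ENNReal.ofReal_eq_ofReal_iff (tsum_nonneg htr_nonneg) hu0]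
  -- now pure real statement:  ∑' tr = u ↔ E(u)
  set f1 : ℕ → ℝ := fun n => if h : n ∈ N then b n * v ⟨n, h⟩ * u ^ n else 0 with hf1
  set f2 : ℕ → ℝ := fun n => if n ∈ N ∨ n = 1 then 0 else b n * u ^ n with hf2
  have hf1_summable : Summable f1 := by
    apply summable_of_ne_finset_zero (s := N)
    intro n hn
    simp [hf1, hn]
  have hf2_nonneg : ∀ n, 0 ≤ f2 n := by
    intro n
    simp only [hf2]
    split
    · exact le_refl 0
    · rename_i h
      push_neg at h
      exact mul_nonneg (hb_nonneg n h.2) (pow_nonneg hu0 n)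
  have hf2_summable : Summable f2 := by
    refine Summable.of_nonneg_of_le hf2_nonneg ?_ hb_summable
    intro n
    simp only [hf2]
    by_cases h : n ∈ N ∨ n = 1
    · rw [if_pos h]
      by_cases h1 : n = 1
      · simp [h1]
      · rw [if_neg h1]
        exact hb_nonneg n h1
    · push_neg at h
      rw [if_neg (by tauto : ¬(n ∈ N ∨ n = 1)), if_neg h.2]
      calc b n * u ^ n ≤ b n * 1 :=
            mul_le_mul_of_nonneg_left (pow_le_one₀ hu0 hu1) (hb_nonneg n h.2)
        _ = b n := mul_one _
  have htr_eq : ∀ n, tr n = (1 / β) * (f1 n + f2 n) := by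
    intro n
    simp only [htr, hf1, hf2, htvr]
    by_cases h1 : n = 1
    · subst h1
      rw [if_pos (Or.inr rfl)]
      simp [h1N]
    · by_cases hn : n ∈ N
      · rw [if_neg h1, dif_pos hn, dif_pos hn, if_pos (Or.inl hn)]
        ring
      · rw [if_neg h1, dif_neg hn, dif_neg hn,
          if_neg (by tauto : ¬(n ∈ N ∨ n = 1))]
        ring
  have hS : (∑' n, tr n) = (1 / β) * ((∑' n, f1 n) + ∑' n, f2 n) := by
    rw [tsum_congr htr_eq, tsum_mul_left, Summable.tsum_add hf1_summable hf2_summable]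
  have hfin : (∑' n, f1 n) = ∑ j : {x // x ∈ N}, b j * v j * u ^ (j : ℕ) := by
    rw [tsum_eq_sum (s := N) (fun n hn => by simp [hf1, hn]),
      ← Finset.sum_coe_sort N f1]
    refine Finset.sum_congr rfl fun j _ => ?_
    simp [hf1, j.2]
  have hfE_eq : ∀ n : ℕ, (if n ∈ N then 0 else b n * u ^ n)
      = f2 n + (if n = 1 then b 1 * u else 0) := by
    intro n
    simp only [hf2]
    by_cases h1 : n = 1
    · subst h1
      simp [h1N, pow_one]
    · by_cases hn : n ∈ N
      · simp [hn, h1]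
      · simp [hn, h1]
  have h1_summable : Summable (fun n : ℕ => if n = 1 then b 1 * u else 0) := by
    apply summable_of_ne_finset_zero (s := {1})
    intro n hn
    simp only [Finset.mem_singleton] at hn
    simp [hn]
  have htsumE : (∑' j : ℕ, if j ∈ N then 0 else b j * u ^ j)
      = (∑' n, f2 n) + b 1 * u := by
    rw [tsum_congr hfE_eq, Summable.tsum_add hf2_summable h1_summable, tsum_ite_eq]
  have hkey : (∑' j : ℕ, if j ∈ N then 0 else b j * u ^ j)
      + (∑ j : {x // x ∈ N}, b j * v j * u ^ (j : ℕ))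
      = β * (∑' n, tr n) - β * u := by
    rw [htsumE, ← hfin, hS]
    have : β * ((1 / β) * ((∑' n, f1 n) + ∑' n, f2 n)) = (∑' n, f1 n) + ∑' n, f2 n := by
      field_simp
    rw [this, hβdef]
    ring
  rw [hkey]
  constructor
  · intro h
    rw [h]
    ring
  · intro h
    have h2 : β * ((∑' n, tr n) - u) = 0 := by ring_nf; ring_nf at h; linarith
    have h3 := (mul_eq_zero.mp h2).resolve_left hβ.ne'
    linarith [sub_eq_zero.mp h3]

end NSec
end Stmt4Aux

open Stmt4Aux in
/-- There is a family `(ρ_k)_{k ∈ ℤ₊^N}` of nonnegative reals such that for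
every `v ∈ [0,1)^N` the multivariate power series converges with sum
`Σ_k ρ_k · ∏_{j∈N} v_j^{k_j} = ρ(v)`. -/
theorem stmt_4
    (b : ℕ → ℝ)
    (hb_nonneg : ∀ j : ℕ, j ≠ 1 → 0 ≤ b j)
    (hb1 : b 1 < 0)
    (hb_sum : HasSum (fun j : ℕ => if j = 1 then 0 else b j) (-(b 1)))
    (N : Finset ℕ) (hN : N.Nonempty) (h1N : (1 : ℕ) ∉ N)
    (hbN : ∀ k ∈ N, 0 < b k)
    (ρ : ({x // x ∈ N} → ℝ) → ℝ)
    (hρ : ∀ v : {x // x ∈ N} → ℝ, (∀ j, v j ∈ Set.Icc (0 : ℝ) 1) →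
      IsLeast {u : ℝ | u ∈ Set.Icc (0 : ℝ) 1 ∧
          (∑' j : ℕ, if j ∈ N then 0 else b j * u ^ j)
            + (∑ j : {x // x ∈ N}, b j * v j * u ^ (j : ℕ)) = 0} (ρ v)) :
    ∃ ρc : ({x // x ∈ N} → ℕ) → ℝ,
      (∀ k, 0 ≤ ρc k) ∧
      ∀ v : {x // x ∈ N} → ℝ, (∀ j, v j ∈ Set.Ico (0 : ℝ) 1) →
        HasSum (fun k : {x // x ∈ N} → ℕ =>
          ρc k * ∏ j : {x // x ∈ N}, v j ^ k j) (ρ v) := by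
  classical
  have hiter_mono : Monotone (iter b N) := by
    apply monotone_nat_of_le_succ
    intro n
    induction n with
    | zero => intro k; exact zero_le
    | succ n ih => exact stepOp_mono b N ih
  have key : ∀ v : {x // x ∈ N} → ℝ, (∀ j, v j ∈ Set.Icc (0 : ℝ) 1) →
      (∑' k : ({x // x ∈ N} → ℕ),
        coeff b N k * mval (fun j => ENNReal.ofReal (v j)) k)
        = ENNReal.ofReal (ρ v) := by
    intro v hv
    simp only [coeff]
    set V : {x // x ∈ N} → ℝ≥0∞ := fun j => ENNReal.ofReal (v j) with hV
    obtain ⟨⟨hr01, hrE⟩, hrmin⟩ := hρ v hv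
    have hr0 : (0 : ℝ) ≤ ρ v := hr01.1
    have hfix : Phi b N V (ENNReal.ofReal (ρ v)) = ENNReal.ofReal (ρ v) :=
      (bridge b N hb_nonneg hb1 hb_sum h1N v hv (ρ v) hr01).mpr hrE
    set W : ℕ → ℝ≥0∞ := fun n => ev (iter b N n) V with hW
    have hWmono : Monotone W := fun m n h => ev_mono (hiter_mono h) V
    have hWsucc : ∀ n, W (n + 1) = Phi b N V (W n) := fun n => ev_stepOp b N _ V
    have hW0 : W 0 = 0 := by simp [hW, ev, iter]
    have hWle : ∀ n, W n ≤ ENNReal.ofReal (ρ v) := by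
      intro n
      induction n with
      | zero => rw [hW0]; exact zero_le
      | succ n ih =>
        rw [hWsucc]
        calc Phi b N V (W n) ≤ Phi b N V (ENNReal.ofReal (ρ v)) := Phi_mono b N V ih
          _ = ENNReal.ofReal (ρ v) := hfix
    set L := ⨆ n, W n with hL
    have hLle : L ≤ ENNReal.ofReal (ρ v) := iSup_le hWle
    have hLfix : Phi b N V L = L := by
      calc Phi b N V L = ∑' n, cE b n * thetaV N V n * ⨆ m, W m ^ n := by
            refine tsum_congr fun n => ?_
            rw [iSup_pow_mono hWmono n]
        _ = ∑' n, ⨆ m, cE b n * thetaV N V n * W m ^ n := by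
            refine tsum_congr fun n => ENNReal.mul_iSup _ _
        _ = ⨆ m, ∑' n, cE b n * thetaV N V n * W m ^ n := by
            refine tsum_iSup_mono _ fun m m' h n => ?_
            exact mul_le_mul' le_rfl (pow_le_pow_left' (hWmono h) n)
        _ = ⨆ m, Phi b N V (W m) := rfl
        _ = ⨆ m, W (m + 1) := iSup_congr fun m => (hWsucc m).symm
        _ = L := le_antisymm (iSup_le fun m => le_iSup W (m + 1))
              (iSup_le fun m => le_iSup_of_le m (hWmono (Nat.le_succ m)))
    have hLne : L ≠ ∞ := (lt_of_le_of_lt hLle ENNReal.ofReal_lt_top).ne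
    have hLl : L = ENNReal.ofReal L.toReal := (ENNReal.ofReal_toReal hLne).symm
    have hlr : L.toReal ≤ ρ v := by
      have h := ENNReal.toReal_mono ENNReal.ofReal_ne_top hLle
      rwa [ENNReal.toReal_ofReal hr0] at h
    have hl01 : L.toReal ∈ Set.Icc (0 : ℝ) 1 :=
      ⟨ENNReal.toReal_nonneg, hlr.trans hr01.2⟩
    have hlE := (bridge b N hb_nonneg hb1 hb_sum h1N v hv L.toReal hl01).mp
      (by rw [← hLl]; exact hLfix)
    have hrl : ρ v ≤ L.toReal := hrmin ⟨hl01, hlE⟩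
    have hLr : L = ENNReal.ofReal (ρ v) := by
      rw [hLl, le_antisymm hlr hrl]
    have hev : (∑' k, (⨆ n, iter b N n k) * mval V k) = L := by
      calc ∑' k, (⨆ n, iter b N n k) * mval V k
          = ∑' k, ⨆ n, iter b N n k * mval V k :=
            tsum_congr fun k => ENNReal.iSup_mul _ _
        _ = ⨆ n, ∑' k, iter b N n k * mval V k :=
            tsum_iSup_mono _ fun m m' h k => mul_le_mul_left (hiter_mono h k) _
        _ = L := rfl
    rw [hev, hLr]
  -- finiteness of coefficients
  have hhalf : ∀ j : {x // x ∈ N}, ((1 : ℝ) / 2) ∈ Set.Icc (0 : ℝ) 1 :=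
    fun _ => ⟨by norm_num, by norm_num⟩
  have hfin := key (fun _ => (1 : ℝ) / 2) hhalf
  have ha_ne_top : ∀ k, coeff b N k ≠ ∞ := by
    intro k htop
    have hm : mval (fun _ : {x // x ∈ N} => ENNReal.ofReal ((1 : ℝ) / 2)) k ≠ 0 := by
      simp only [mval]
      rw [Finset.prod_ne_zero_iff]
      intro j _
      apply pow_ne_zero
      simp [ENNReal.ofReal_eq_zero]
    have hle : coeff b N k * mval (fun _ : {x // x ∈ N} => ENNReal.ofReal ((1 : ℝ) / 2)) k
        ≤ ENNReal.ofReal (ρ (fun _ => (1 : ℝ) / 2)) := by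
      rw [← hfin]
      exact ENNReal.le_tsum k
    rw [htop, ENNReal.top_mul hm] at hle
    exact ENNReal.ofReal_ne_top (top_le_iff.mp hle)
  refine ⟨fun k => (coeff b N k).toReal, fun k => ENNReal.toReal_nonneg, ?_⟩
  intro v hv
  have hv' : ∀ j, v j ∈ Set.Icc (0 : ℝ) 1 := fun j => ⟨(hv j).1, (hv j).2.le⟩
  have hkey := key v hv'
  set V : {x // x ∈ N} → ℝ≥0∞ := fun j => ENNReal.ofReal (v j) with hV
  have hterm_ne_top : ∀ k, coeff b N k * mval V k ≠ ∞ := by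
    intro k
    refine ENNReal.mul_ne_top (ha_ne_top k) ?_
    simp only [mval]
    exact ENNReal.prod_ne_top fun j _ => ENNReal.pow_ne_top ENNReal.ofReal_ne_top
  have hsum_ne : (∑' k, coeff b N k * mval V k) ≠ ∞ := by
    rw [hkey]
    exact ENNReal.ofReal_ne_top
  have hsummable := ENNReal.summable_toReal hsum_ne
  have hρ0 : (0 : ℝ) ≤ ρ v := (hρ v hv').1.1.1
  have htsum : (∑' k, (coeff b N k * mval V k).toReal) = ρ v := by
    rw [← ENNReal.tsum_toReal_eq hterm_ne_top, hkey, ENNReal.toReal_ofReal hρ0]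
  have hterm_eq : (fun k => (coeff b N k * mval V k).toReal)
      = fun k : {x // x ∈ N} → ℕ => (coeff b N k).toReal * ∏ j, v j ^ k j := by
    funext k
    rw [ENNReal.toReal_mul]
    congr 1
    simp only [mval]
    rw [ENNReal.toReal_prod]
    exact Finset.prod_congr rfl fun j _ => by
      rw [ENNReal.toReal_pow, ENNReal.toReal_ofReal (hv j).1]
  have hHasSum : HasSum (fun k => (coeff b N k * mval V k).toReal) (ρ v) :=
    hsummable.hasSum_iff.mpr htsum
  rw [hterm_eq] at hHasSum
  exact hHasSum
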